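/- Let G and G' be graphs and let p be a map from V(G) ∪ V(G') to ℝ^d such that (G,p) and (G',p) are infinitesimally rigid frameworks in ℝ^d and such that V(G) ∩ V(G') contains d points whose images under p are affinely independent. Then (G ∪ G', p) is infinitesimally rigid in ℝ^d. -/

import Mathlib

open scoped Classical RealInnerProductSpace

/-- The space of infinitesimal motions of the framework given by the graph `G` restricted
to the vertex set `s`, with embedding `p`. -/
noncomputable def motionSpaceOn {V : Type} [Fintype V] {d : ℕ}
    (G : SimpleGraph V) (p : V → EuclideanSpace ℝ (Fin d)) (s : Set V) :
    Submodule ℝ (s → EuclideanSpace ℝ (Fin d)) where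
  carrier := {m | ∀ u v : s, G.Adj u v → ⟪m u - m v, p u - p v⟫ = 0}
  add_mem' := by
    intro x y hx hy u v h
    have hx' := hx u v h
    have hy' := hy u v h
    have : (x + y) u - (x + y) v = (x u - x v) + (y u - y v) := by
      simp [Pi.add_apply]; abel
    rw [this, inner_add_left, hx', hy', add_zero]
  zero_mem' := by intro u v h; simp
  smul_mem' := by
    intro c x hx u v h
    have hx' := hx u v h
    have : (c • x) u - (c • x) v = c • (x u - x v) := by
      simp [Pi.smul_apply, smul_sub]
    rw [this, real_inner_smul_left, hx', mul_zero]

/-- The framework `(G, p)` on the vertex set `s` is infinitesimally rigid in `ℝ^d`: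
its points affinely span `ℝ^d` and its motion space has the minimal possible dimension
`C(d+1,2)`. -/
noncomputable def IsInfRigidOn {V : Type} [Fintype V] {d : ℕ}
    (G : SimpleGraph V) (p : V → EuclideanSpace ℝ (Fin d)) (s : Set V) : Prop :=
  affineSpan ℝ (p '' s) = ⊤ ∧
  Module.finrank ℝ (motionSpaceOn G p s) = (d + 1).choose 2

namespace StmtGlue
open Module


abbrev Eucl (d : ℕ) := EuclideanSpace ℝ (Fin d)

def IsSkew {d : ℕ} (S : Eucl d →ₗ[ℝ] Eucl d) : Prop := ∀ x y, ⟪S x, y⟫ = -⟪x, S y⟫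

lemma IsSkew.inner_self {d : ℕ} {S : Eucl d →ₗ[ℝ] Eucl d} (hS : IsSkew S) (x : Eucl d) :
    ⟪S x, x⟫ = 0 := by
  have h := hS x x
  have h2 : ⟪x, S x⟫ = ⟪S x, x⟫ := real_inner_comm _ _
  linarith

/-- The submodule of skew-symmetric endomorphisms. -/
noncomputable def Skew (d : ℕ) : Submodule ℝ (Eucl d →ₗ[ℝ] Eucl d) where
  carrier := {S | IsSkew S}
  add_mem' := by
    intro a b ha hb x y
    have h1 := ha x y; have h2 := hb x y
    simp only [LinearMap.add_apply, inner_add_left, inner_add_right]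
    linarith
  zero_mem' := by intro x y; simp
  smul_mem' := by
    intro c a ha x y
    have h1 := ha x y
    simp only [LinearMap.smul_apply, real_inner_smul_left, real_inner_smul_right, h1]
    ring

lemma mem_skew_iff {d : ℕ} {S : Eucl d →ₗ[ℝ] Eucl d} : S ∈ Skew d ↔ IsSkew S := Iff.rfl

/-- A skew map vanishing on a subspace of codimension at most 1 is zero. -/
lemma skew_eq_zero {d : ℕ} {S : Eucl d →ₗ[ℝ] Eucl d} (hS : IsSkew S)
    (U : Submodule ℝ (Eucl d)) (hU : ∀ u ∈ U, S u = 0)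
    (hdim : d ≤ finrank ℝ U + 1) : S = 0 := by
  have horth : ∀ v ∈ Uᗮ, S v = 0 := by
    intro v hv
    by_cases hv0 : v = 0
    · simp [hv0]
    have hSvU : S v ∈ Uᗮ := by
      intro u hu
      have h1 := hS u v
      rw [hU u hu] at h1
      simp only [inner_zero_left] at h1
      linarith [h1]
    have hfr : finrank ℝ (Eucl d) = d := finrank_euclideanSpace_fin
    have hsum := Submodule.finrank_add_finrank_orthogonal U
    rw [hfr] at hsum
    have h1 : finrank ℝ Uᗮ ≤ 1 := by omega
    have hle : Submodule.span ℝ {v} ≤ Uᗮ := by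
      rw [Submodule.span_le, Set.singleton_subset_iff]; exact hv
    have hsp : Submodule.span ℝ {v} = Uᗮ := by
      apply Submodule.eq_of_le_of_finrank_le hle
      rw [finrank_span_singleton hv0]; exact h1
    obtain ⟨c, hc⟩ := Submodule.mem_span_singleton.mp (hsp ▸ hSvU)
    have hz : ⟪S v, v⟫ = 0 := hS.inner_self v
    rw [← hc, real_inner_smul_left] at hz
    have hvv : ⟪v, v⟫ ≠ (0:ℝ) := inner_self_ne_zero.mpr hv0
    have hc0 : c = 0 := by
      rcases mul_eq_zero.mp hz with h | h
      · exact h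
      · exact absurd h hvv
    rw [← hc, hc0, zero_smul]
  ext x
  obtain ⟨y, hy, z, hz, rfl⟩ := Submodule.exists_add_mem_mem_orthogonal (K := U) x
  simp [map_add, hU y hy, horth z hz]

/-- A skew affine motion vanishing on a set whose vector span has dimension ≥ d-1 is zero. -/
lemma skew_vanish_on {d : ℕ} {S : Eucl d →ₗ[ℝ] Eucl d} (hS : IsSkew S)
    {Q : Set (Eucl d)} (w : Eucl d) (h : ∀ x ∈ Q, S x + w = 0)
    (hdim : d ≤ finrank ℝ (vectorSpan ℝ Q) + 1) : S = 0 ∧ (Q.Nonempty → w = 0) := by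
  have hU : ∀ u ∈ vectorSpan ℝ Q, S u = 0 := by
    intro u hu
    have hle : vectorSpan ℝ Q ≤ LinearMap.ker S := by
      rw [vectorSpan_def, Submodule.span_le]
      rintro _ ⟨x, hx, y, hy, rfl⟩
      have h1 := h x hx; have h2 := h y hy
      simp only [SetLike.mem_coe, LinearMap.mem_ker]
      have heq : S (x -ᵥ y) = (S x + w) - (S y + w) := by
        simp only [vsub_eq_sub, map_sub]; abel
      rw [heq, h1, h2, sub_self]
    exact LinearMap.mem_ker.mp (hle hu)
  have hS0 : S = 0 := skew_eq_zero hS _ hU hdim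
  refine ⟨hS0, ?_⟩
  rintro ⟨x, hx⟩
  have := h x hx
  rw [hS0] at this
  simpa using this


/-- Index type for strictly-lower-triangular entries. -/
abbrev LowIdx (d : ℕ) := Σ i : Fin d, Fin i.val

lemma card_lowIdx (d : ℕ) : Fintype.card (LowIdx d) = d.choose 2 := by
  rw [Fintype.card_sigma]
  simp only [Fintype.card_fin]
  rw [Fin.sum_univ_eq_sum_range (fun i => i) d, Finset.sum_range_id, Nat.choose_two_right]

noncomputable def coordMap (d : ℕ) : Skew d →ₗ[ℝ] (LowIdx d → ℝ) where
  toFun S q := ⟪S.1 (EuclideanSpace.single (Fin.castLE q.1.isLt.le q.2) 1),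
    EuclideanSpace.single q.1 (1:ℝ)⟫
  map_add' a b := by
    funext q
    simp [inner_add_left]
  map_smul' c a := by
    funext q
    simp [real_inner_smul_left]

lemma euclid_apply_eq_inner {d : ℕ} (v : Eucl d) (i : Fin d) :
    v i = ⟪v, EuclideanSpace.single i (1:ℝ)⟫ := by
  rw [EuclideanSpace.inner_single_right]
  simp

lemma coordMap_bijective (d : ℕ) : Function.Bijective (coordMap d) := by
  constructor
  · rw [← LinearMap.ker_eq_bot, LinearMap.ker_eq_bot']
    rintro ⟨S, hSk⟩ hz
    have hz' : ∀ q : LowIdx d, ⟪S (EuclideanSpace.single (Fin.castLE q.1.isLt.le q.2) 1),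
        EuclideanSpace.single q.1 (1:ℝ)⟫ = 0 := fun q => congrFun hz q
    have hent : ∀ i j : Fin d, ⟪S (EuclideanSpace.single j 1),
        EuclideanSpace.single i (1:ℝ)⟫ = 0 := by
      intro i j
      rcases lt_trichotomy (j : ℕ) (i : ℕ) with h | h | h
      · have := hz' ⟨i, ⟨j, h⟩⟩
        simpa using this
      · have hij : j = i := Fin.ext h
        subst hij
        exact (hSk : IsSkew S).inner_self _
      · have h2 := (hSk : IsSkew S) (EuclideanSpace.single j 1)
          (EuclideanSpace.single i (1:ℝ))
        have h3 : ⟪S (EuclideanSpace.single i (1:ℝ)),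
            EuclideanSpace.single j (1:ℝ)⟫ = 0 := by
          simpa using hz' ⟨j, ⟨i, h⟩⟩
        rw [h2, show ⟪EuclideanSpace.single j (1:ℝ), S (EuclideanSpace.single i (1:ℝ))⟫
          = ⟪S (EuclideanSpace.single i (1:ℝ)), EuclideanSpace.single j (1:ℝ)⟫ from
          real_inner_comm _ _, h3, neg_zero]
    have hbasis : ∀ j : Fin d, S (EuclideanSpace.single j 1) = 0 := by
      intro j
      ext i
      rw [show (S (EuclideanSpace.single j 1)) i
        = ⟪S (EuclideanSpace.single j 1), EuclideanSpace.single i (1:ℝ)⟫ from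
          euclid_apply_eq_inner _ i, hent i j]
      rfl
    apply Subtype.ext
    apply (EuclideanSpace.basisFun (Fin d) ℝ).toBasis.ext
    intro j
    have hb : ((EuclideanSpace.basisFun (Fin d) ℝ).toBasis j : Eucl d)
        = EuclideanSpace.single j 1 := by
      rw [OrthonormalBasis.coe_toBasis]
      exact EuclideanSpace.basisFun_apply _ _ j
    rw [hb]
    simp only [ZeroMemClass.coe_zero, LinearMap.zero_apply]
    exact hbasis j
  · intro f
    set A : Matrix (Fin d) (Fin d) ℝ := fun i j =>
      if h : (j : ℕ) < (i : ℕ) then f ⟨i, ⟨j, h⟩⟩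
      else if h' : (i : ℕ) < (j : ℕ) then -f ⟨j, ⟨i, h'⟩⟩ else 0 with hAdef
    have hA : ∀ i j, A j i = -A i j := by
      intro i j
      simp only [hAdef]
      rcases lt_trichotomy ((i : ℕ)) ((j : ℕ)) with h | h | h
      · rw [dif_pos h, dif_neg (asymm h), dif_pos h, neg_neg]
      · rw [dif_neg (by omega), dif_neg (by omega), dif_neg (by omega), dif_neg (by omega),
          neg_zero]
      · rw [dif_neg (asymm h), dif_pos h, dif_pos h]
    set S : Eucl d →ₗ[ℝ] Eucl d := Matrix.toEuclideanLin A with hSdef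
    have key : ∀ (x : Eucl d) (i : Fin d), (S x) i = ∑ j, A i j * x j := by
      intro x i
      rw [hSdef, Matrix.toEuclideanLin_apply]
      rfl
    have hSk : IsSkew S := by
      intro x y
      simp only [PiLp.inner_apply, RCLike.inner_apply, conj_trivial, key]
      simp only [Finset.sum_mul, Finset.mul_sum, ← Finset.sum_neg_distrib]
      rw [Finset.sum_comm]
      refine Finset.sum_congr rfl fun j _ => Finset.sum_congr rfl fun i _ => ?_
      rw [hA j i]
      ring
    refine ⟨⟨S, hSk⟩, ?_⟩
    funext q
    obtain ⟨i, j⟩ := q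
    show ⟪S (EuclideanSpace.single (Fin.castLE i.isLt.le j) 1),
      EuclideanSpace.single i (1:ℝ)⟫ = f ⟨i, j⟩
    rw [← euclid_apply_eq_inner, key]
    have : ∀ k, (EuclideanSpace.single (Fin.castLE i.isLt.le j) (1:ℝ)) k
        = if k = Fin.castLE i.isLt.le j then 1 else 0 := by
      intro k; rw [EuclideanSpace.single_apply]
    simp only [this, mul_ite, mul_one, mul_zero]
    rw [Finset.sum_ite_eq' Finset.univ (Fin.castLE i.isLt.le j) (fun k => A i k)]
    simp only [Finset.mem_univ, if_true]
    have hlt : ((Fin.castLE i.isLt.le j : Fin d) : ℕ) < (i : ℕ) := by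
      simp [Fin.coe_castLE, j.isLt]
    simp only [hAdef]
    rw [dif_pos hlt]
    rfl

lemma finrank_skew (d : ℕ) : finrank ℝ (Skew d) = d.choose 2 := by
  rw [LinearEquiv.finrank_eq (LinearEquiv.ofBijective (coordMap d) (coordMap_bijective d)),
    Module.finrank_fintype_fun_eq_card, card_lowIdx]

variable {V : Type} [Fintype V] {d : ℕ}

noncomputable def triv (p : V → Eucl d) (s : Set V) :
    (Skew d × Eucl d) →ₗ[ℝ] (s → Eucl d) where
  toFun Sw v := Sw.1.1 (p v) + Sw.2
  map_add' a b := by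
    funext v
    simp only [Prod.fst_add, Prod.snd_add, Submodule.coe_add, LinearMap.add_apply, Pi.add_apply]
    abel
  map_smul' c a := by
    funext v
    simp only [Prod.smul_fst, Prod.smul_snd, SetLike.val_smul, LinearMap.smul_apply,
      RingHom.id_apply, Pi.smul_apply, smul_add]

noncomputable def trivOn (p : V → Eucl d) (s : Set V) : Submodule ℝ (s → Eucl d) :=
  LinearMap.range (triv p s)

lemma trivOn_le_motion (G : SimpleGraph V) (p : V → Eucl d) (s : Set V) :
    trivOn p s ≤ motionSpaceOn G p s := by
  rintro m ⟨⟨S, w⟩, rfl⟩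
  intro u v h
  show ⟪(S.1 (p u) + w) - (S.1 (p v) + w), p u - p v⟫ = 0
  have h1 : (S.1 (p u) + w) - (S.1 (p v) + w) = S.1 ((p u : Eucl d) - p v) := by
    rw [map_sub]; abel
  rw [h1]
  exact IsSkew.inner_self S.2 _

lemma affine_nonempty {p : V → Eucl d} {s : Set V}
    (hspan : affineSpan ℝ (p '' s) = ⊤) : (p '' s).Nonempty := by
  by_contra h
  rw [Set.not_nonempty_iff_eq_empty] at h
  rw [h] at hspan
  simp at hspan

lemma triv_injective {p : V → Eucl d} {s : Set V}
    (hspan : affineSpan ℝ (p '' s) = ⊤) : Function.Injective (triv p s) := by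
  rw [← LinearMap.ker_eq_bot, LinearMap.ker_eq_bot']
  rintro ⟨S, w⟩ h0
  have h : ∀ x ∈ p '' s, S.1 x + w = 0 := by
    rintro x ⟨v, hv, rfl⟩
    have := congrFun h0 ⟨v, hv⟩
    simpa [triv] using this
  have hvs : vectorSpan ℝ (p '' s) = ⊤ := by
    rw [← direction_affineSpan, hspan]
    exact AffineSubspace.direction_top ℝ _ _
  have hdim : d ≤ finrank ℝ (vectorSpan ℝ (p '' s)) + 1 := by
    rw [hvs, finrank_top, finrank_euclideanSpace_fin]
    omega
  obtain ⟨hS0, hw⟩ := skew_vanish_on (S.2 : IsSkew S.1) w h hdim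
  have hw0 : w = 0 := hw (affine_nonempty hspan)
  exact Prod.ext (Subtype.ext hS0) hw0

lemma finrank_trivOn (p : V → Eucl d) (s : Set V)
    (hspan : affineSpan ℝ (p '' s) = ⊤) :
    finrank ℝ (trivOn p s) = (d + 1).choose 2 := by
  rw [trivOn, LinearMap.finrank_range_of_inj (triv_injective hspan),
    Module.finrank_prod, finrank_skew, finrank_euclideanSpace_fin,
    Nat.choose_succ_succ d 1, Nat.choose_one_right]
  exact Nat.add_comm _ _

lemma motion_eq_triv (G : SimpleGraph V) (p : V → Eucl d) (s : Set V)
    (h1 : affineSpan ℝ (p '' s) = ⊤)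
    (h2 : finrank ℝ (motionSpaceOn G p s) = (d + 1).choose 2) :
    motionSpaceOn G p s = trivOn p s := by
  refine (Submodule.eq_of_le_of_finrank_eq (trivOn_le_motion G p s) ?_).symm
  rw [finrank_trivOn p s h1, h2]

end StmtGlue

/-- Gluing Lemma: if `(G,p)` with vertex set `A` and `(G',p)` with vertex
set `B` are infinitesimally rigid in `ℝ^d` and `A ∩ B` contains `d` points whose images
under `p` are affinely independent, then `(G ∪ G', p)` on `A ∪ B` is infinitesimally
rigid. -/
theorem stmt16 {V : Type} [Fintype V] {d : ℕ}
    (G G' : SimpleGraph V) (p : V → EuclideanSpace ℝ (Fin d)) (A B : Set V)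
    (hGA : ∀ u v : V, G.Adj u v → u ∈ A ∧ v ∈ A)
    (hGB : ∀ u v : V, G'.Adj u v → u ∈ B ∧ v ∈ B)
    (hA : IsInfRigidOn G p A) (hB : IsInfRigidOn G' p B)
    (t : Fin d → V) (ht : ∀ i, t i ∈ A ∩ B)
    (hind : AffineIndependent ℝ (fun i => p (t i))) :
    IsInfRigidOn (G ⊔ G') p (A ∪ B) := by
  classical
  have hspanAB : affineSpan ℝ (p '' (A ∪ B)) = ⊤ := by
    rw [eq_top_iff, ← hA.1]
    exact affineSpan_mono ℝ (Set.image_mono Set.subset_union_left)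
  refine ⟨hspanAB, ?_⟩
  have hMA := StmtGlue.motion_eq_triv G p A hA.1 hA.2
  have hMB := StmtGlue.motion_eq_triv G' p B hB.1 hB.2
  have hM : motionSpaceOn (G ⊔ G') p (A ∪ B) = StmtGlue.trivOn p (A ∪ B) := by
    refine le_antisymm ?_ (StmtGlue.trivOn_le_motion _ p _)
    intro m hm
    have hmA : (fun v : A => m ⟨v.1, Set.mem_union_left B v.2⟩) ∈ motionSpaceOn G p A := by
      intro u v huv
      exact hm ⟨u.1, Set.mem_union_left B u.2⟩ ⟨v.1, Set.mem_union_left B v.2⟩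
        ((SimpleGraph.sup_adj G G' _ _).mpr (Or.inl huv))
    have hmB : (fun v : B => m ⟨v.1, Set.mem_union_right A v.2⟩) ∈ motionSpaceOn G' p B := by
      intro u v huv
      exact hm ⟨u.1, Set.mem_union_right A u.2⟩ ⟨v.1, Set.mem_union_right A v.2⟩
        ((SimpleGraph.sup_adj G G' _ _).mpr (Or.inr huv))
    rw [hMA] at hmA
    rw [hMB] at hmB
    obtain ⟨⟨S, w⟩, hSw⟩ := hmA
    obtain ⟨⟨S', w'⟩, hSw'⟩ := hmB
    have hag : ∀ x ∈ Set.range (fun i => p (t i)), (S.1 - S'.1) x + (w - w') = 0 := by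
      rintro x ⟨i, rfl⟩
      have h1 : S.1 (p (t i)) + w = m ⟨t i, Set.mem_union_left B (ht i).1⟩ :=
        congrFun hSw ⟨t i, (ht i).1⟩
      have h2 : S'.1 (p (t i)) + w' = m ⟨t i, Set.mem_union_right A (ht i).2⟩ :=
        congrFun hSw' ⟨t i, (ht i).2⟩
      have h3 : S.1 (p (t i)) + w = S'.1 (p (t i)) + w' := h1.trans h2.symm
      rw [LinearMap.sub_apply,
        show (S.1 (p (t i)) - S'.1 (p (t i))) + (w - w')
          = (S.1 (p (t i)) + w) - (S'.1 (p (t i)) + w') from by abel, h3, sub_self]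
    have hdim : d ≤ Module.finrank ℝ (vectorSpan ℝ (Set.range fun i => p (t i))) + 1 := by
      by_cases hd : d = 0
      · exact le_trans (by omega) (Nat.succ_le_succ (Nat.zero_le _))
      · have hcard : Fintype.card (Fin d) = (d - 1) + 1 := by
          rw [Fintype.card_fin]; omega
        rw [hind.finrank_vectorSpan hcard]; omega
    obtain ⟨hS0, hw⟩ := StmtGlue.skew_vanish_on
      (show StmtGlue.IsSkew (S.1 - S'.1) from (StmtGlue.Skew d).sub_mem S.2 S'.2)
      (w - w') hag hdim
    have hSS : S.1 = S'.1 := sub_eq_zero.mp hS0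
    have hww : w = w' := by
      by_cases hd : d = 0
      · have hsub : Subsingleton (StmtGlue.Eucl d) :=
          ⟨fun a b => by ext i; exact absurd i.isLt (by omega)⟩
        exact Subsingleton.elim w w'
      · exact sub_eq_zero.mp (hw ⟨p (t ⟨0, Nat.pos_of_ne_zero hd⟩), Set.mem_range_self _⟩)
    refine ⟨(S, w), ?_⟩
    funext v
    show S.1 (p v) + w = m v
    rcases v.2 with hv | hv
    · exact congrFun hSw ⟨v.1, hv⟩
    · rw [hSS, hww]
      exact congrFun hSw' ⟨v.1, hv⟩
  rw [hM, StmtGlue.finrank_trivOn p _ hspanAB]
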